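/- arXiv:2104.04647 — 2 statements merged into one kernel-verified Lean document; each statement's English description precedes it below -/
import Mathlib

section
/- (Neyman variance of the difference in means.) In a completely randomized experiment where a uniformly random subset S of size m of {1,…,M} is treated, with fixed potential outcomes a_i(1), a_i(0), the difference-in-means estimator τ̂ = m^{-1} Σ_{i∈S} a_i(1) − (M−m)^{-1} Σ_{i∉S} a_i(0) has variance Var(τ̂) = S₁²/m + S₀²/(M−m) − S_τ²/M, where S_z² = (M−1)^{-1} Σ_{i=1}^M ( a_i(z) − ā(z) )² for z = 0,1, S_τ² = (M−1)^{-1} Σ_{i=1}^M ( τ_i − τ̄ )², τ_i = a_i(1) − a_i(0), ā(z) and τ̄ are the corresponding population averages. -/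
open Finset

lemma count_supersets {α : Type*} [DecidableEq α] (u T : Finset α) (m : ℕ) (hT : T ⊆ u)
    (hTm : T.card ≤ m) :
    ((u.powersetCard m).filter (fun S => T ⊆ S)).card = (u.card - T.card).choose (m - T.card) := by
  rw [← Finset.card_sdiff_of_subset hT, ← Finset.card_powersetCard]
  apply Finset.card_bij (fun S _ => S \ T)
  · intro S hS
    simp only [mem_filter, mem_powersetCard] at hS
    rw [mem_powersetCard]
    exact ⟨sdiff_subset_sdiff hS.1.1 le_rfl, by rw [card_sdiff_of_subset hS.2, hS.1.2]⟩
  · intro S1 h1 S2 h2 h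
    simp only [mem_filter, mem_powersetCard] at h1 h2
    rw [← sdiff_union_of_subset h1.2, ← sdiff_union_of_subset h2.2, h]
  · intro V hV
    rw [mem_powersetCard] at hV
    have hdisj : Disjoint V T := Finset.disjoint_of_subset_left hV.1 sdiff_disjoint
    refine ⟨V ∪ T, ?_, ?_⟩
    · simp only [mem_filter, mem_powersetCard]
      refine ⟨⟨union_subset (hV.1.trans sdiff_subset) hT, ?_⟩, subset_union_right⟩
      rw [card_union_of_disjoint hdisj, hV.2]
      omega
    · rw [union_sdiff_right, sdiff_eq_self_of_disjoint hdisj]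

-- first moment
lemma first_moment (M m : ℕ) (hm : 0 < m) (hM : m ≤ M) (w : Fin M → ℝ) :
    ∑ S ∈ Finset.powersetCard m (Finset.univ : Finset (Fin M)), ∑ i ∈ S, w i
      = ((M - 1).choose (m - 1) : ℝ) * ∑ i, w i := by
  have h1 : ∀ S : Finset (Fin M), ∑ i ∈ S, w i = ∑ i : Fin M, if i ∈ S then w i else 0 := by
    intro S
    rw [Finset.sum_ite_mem, univ_inter]
  simp_rw [h1]
  rw [Finset.sum_comm]
  have h2 : ∀ i : Fin M,
      ∑ S ∈ Finset.powersetCard m (Finset.univ : Finset (Fin M)), (if i ∈ S then w i else 0)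
        = ((M - 1).choose (m - 1) : ℝ) * w i := by
    intro i
    rw [Finset.sum_ite, Finset.sum_const, Finset.sum_const, smul_zero, add_zero]
    have : (Finset.powersetCard m (Finset.univ : Finset (Fin M))).filter (fun S => i ∈ S)
        = (Finset.powersetCard m (Finset.univ : Finset (Fin M))).filter (fun S => {i} ⊆ S) := by
      simp [Finset.singleton_subset_iff]
    rw [this, count_supersets _ _ _ (by simp) (by simp; omega)]
    simp [Fintype.card_fin, nsmul_eq_mul]
  rw [Finset.sum_congr rfl (fun i _ => h2 i), ← Finset.mul_sum]
  simp

lemma pair_count (M m : ℕ) (hMm : m ≤ M) {i j : Fin M} (hij : i ≠ j) :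
    ((Finset.powersetCard m (Finset.univ : Finset (Fin M))).filter
        (fun S => i ∈ S ∧ j ∈ S)).card
      = if 2 ≤ m then (M-2).choose (m-2) else 0 := by
  have hcard2 : ({i, j} : Finset (Fin M)).card = 2 := by
    rw [card_insert_of_notMem (by simpa using hij), card_singleton]
  have heq : (Finset.powersetCard m (Finset.univ : Finset (Fin M))).filter
        (fun S => i ∈ S ∧ j ∈ S)
      = (Finset.powersetCard m (Finset.univ : Finset (Fin M))).filter
        (fun S => ({i, j} : Finset (Fin M)) ⊆ S) := by
    apply Finset.filter_congr
    intro S _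
    simp [Finset.insert_subset_iff]
  split_ifs with h2
  · rw [heq, count_supersets _ _ _ (subset_univ _) (hcard2 ▸ h2), hcard2]
    simp
  · rw [Finset.card_eq_zero, Finset.filter_eq_empty_iff]
    intro S hS hmem
    rw [mem_powersetCard] at hS
    have : ({i, j} : Finset (Fin M)) ⊆ S := by
      simp [Finset.insert_subset_iff, hmem.1, hmem.2]
    have := Finset.card_le_card this
    omega

lemma second_moment (M m : ℕ) (hm : 0 < m) (hMm : m ≤ M) (w : Fin M → ℝ) :
    ∑ S ∈ Finset.powersetCard m (Finset.univ : Finset (Fin M)), (∑ i ∈ S, w i)^2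
      = ((M-1).choose (m-1) : ℝ) * ∑ i, (w i)^2
        + (((if 2 ≤ m then (M-2).choose (m-2) else 0 : ℕ)) : ℝ)
            * ∑ i, ∑ j ∈ Finset.univ.erase i, w i * w j := by
  have hmem : ∀ (S : Finset (Fin M)) (f : Fin M → ℝ),
      ∑ i ∈ S, f i = ∑ i : Fin M, if i ∈ S then f i else 0 := by
    intro S f; rw [Finset.sum_ite_mem, univ_inter]
  have h1 : ∀ S : Finset (Fin M), (∑ i ∈ S, w i)^2
      = ∑ i : Fin M, ∑ j : Fin M, (if i ∈ S ∧ j ∈ S then w i * w j else 0) := by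
    intro S
    rw [sq, Finset.sum_mul_sum, hmem S (fun i => ∑ j ∈ S, w i * w j)]
    refine Finset.sum_congr rfl fun i _ => ?_
    split_ifs with h
    · rw [hmem S (fun j => w i * w j)]
      exact Finset.sum_congr rfl fun j _ => by simp [h]
    · simp [h]
  rw [Finset.sum_congr rfl fun S _ => h1 S, Finset.sum_comm]
  have h2 : ∀ i : Fin M,
      (∑ S ∈ Finset.powersetCard m (Finset.univ : Finset (Fin M)),
        ∑ j : Fin M, (if i ∈ S ∧ j ∈ S then w i * w j else 0))
      = ((M-1).choose (m-1) : ℝ) * (w i)^2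
        + (((if 2 ≤ m then (M-2).choose (m-2) else 0 : ℕ)) : ℝ)
            * ∑ j ∈ Finset.univ.erase i, w i * w j := by
    intro i
    rw [Finset.sum_comm]
    have h3 : ∀ j : Fin M,
        (∑ S ∈ Finset.powersetCard m (Finset.univ : Finset (Fin M)),
          (if i ∈ S ∧ j ∈ S then w i * w j else 0))
        = (((Finset.powersetCard m (Finset.univ : Finset (Fin M))).filter
            (fun S => i ∈ S ∧ j ∈ S)).card : ℝ) * (w i * w j) := by
      intro j
      rw [Finset.sum_ite, Finset.sum_const, Finset.sum_const, smul_zero, add_zero,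
        nsmul_eq_mul]
    rw [Finset.sum_congr rfl fun j _ => h3 j]
    rw [← Finset.sum_erase_add _ _ (mem_univ i)]
    have hdiag : ((Finset.powersetCard m (Finset.univ : Finset (Fin M))).filter
        (fun S => i ∈ S ∧ i ∈ S)).card = (M-1).choose (m-1) := by
      have : (Finset.powersetCard m (Finset.univ : Finset (Fin M))).filter
          (fun S => i ∈ S ∧ i ∈ S)
        = (Finset.powersetCard m (Finset.univ : Finset (Fin M))).filter
          (fun S => ({i} : Finset (Fin M)) ⊆ S) := by
        apply Finset.filter_congr; intro S _; simp
      rw [this, count_supersets _ _ _ (subset_univ _) (by simp; omega)]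
      simp
    rw [hdiag]
    have hoff : ∀ j ∈ Finset.univ.erase i,
        (((Finset.powersetCard m (Finset.univ : Finset (Fin M))).filter
            (fun S => i ∈ S ∧ j ∈ S)).card : ℝ) * (w i * w j)
        = (((if 2 ≤ m then (M-2).choose (m-2) else 0 : ℕ)) : ℝ) * (w i * w j) := by
      intro j hj
      rw [pair_count M m hMm (Ne.symm (Finset.ne_of_mem_erase hj))]
    rw [Finset.sum_congr rfl hoff, ← Finset.mul_sum]
    ring
  rw [Finset.sum_congr rfl fun i _ => h2 i, Finset.sum_add_distrib, ← Finset.mul_sum,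
    ← Finset.mul_sum]

set_option maxHeartbeats 2000000 in
lemma key_alg (Mr mr n T1 T0 P1 P0 P10 : ℝ) (hM : Mr ≠ 0) (hm : mr ≠ 0) (hMm : Mr - mr ≠ 0)
    (hM1 : Mr - 1 ≠ 0) (hn : n ≠ 0) :
    n⁻¹ *
      (n * mr / Mr * ((mr)⁻¹ ^ 2 * P1 + (Mr - mr)⁻¹ ^ 2 * P0 + 2 * (mr)⁻¹ * (Mr - mr)⁻¹ * P10) +
            n * mr * (mr - 1) / (Mr * (Mr - 1)) *
              (((mr)⁻¹ * T1 + (Mr - mr)⁻¹ * T0) ^ 2 -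
                ((mr)⁻¹ ^ 2 * P1 + (Mr - mr)⁻¹ ^ 2 * P0 + 2 * (mr)⁻¹ * (Mr - mr)⁻¹ * P10)) -
          2 * (n⁻¹ * (n * mr / Mr) * ((mr)⁻¹ * T1 + (Mr - mr)⁻¹ * T0)) *
            (n * mr / Mr * ((mr)⁻¹ * T1 + (Mr - mr)⁻¹ * T0)) +
        n * (n⁻¹ * (n * mr / Mr) * ((mr)⁻¹ * T1 + (Mr - mr)⁻¹ * T0)) ^ 2) =
    (Mr - 1)⁻¹ * (P1 - 2 * ((Mr)⁻¹ * T1) * T1 + Mr * ((Mr)⁻¹ * T1) ^ 2) / mr +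
        (Mr - 1)⁻¹ * (P0 - 2 * ((Mr)⁻¹ * T0) * T0 + Mr * ((Mr)⁻¹ * T0) ^ 2) / (Mr - mr) -
      (Mr - 1)⁻¹ *
          (P1 + P0 - 2 * P10 - 2 * ((Mr)⁻¹ * (T1 - T0)) * T1 + 2 * ((Mr)⁻¹ * (T1 - T0)) * T0 +
            Mr * ((Mr)⁻¹ * (T1 - T0)) ^ 2) /
        Mr := by
  field_simp
  ring

/-- Neyman's variance formula for the difference-in-means estimator in a
completely randomized experiment. -/
theorem stmt_8 (M m : ℕ) (hM2 : 2 ≤ M) (hm : 0 < m) (hM : m < M)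
    (a1 a0 : Fin M → ℝ)
    (E : ((Finset (Fin M)) → ℝ) → ℝ)
    (hE : ∀ f, E f = ((Finset.powersetCard m (Finset.univ : Finset (Fin M))).card : ℝ)⁻¹ *
      ∑ S ∈ Finset.powersetCard m (Finset.univ : Finset (Fin M)), f S)
    (τhat : Finset (Fin M) → ℝ)
    (hτhat : ∀ S, τhat S = (m : ℝ)⁻¹ * ∑ i ∈ S, a1 i - ((M : ℝ) - m)⁻¹ * ∑ i ∈ Sᶜ, a0 i)
    (abar1 abar0 τbar S1sq S0sq Stausq : ℝ)
    (habar1 : abar1 = (M : ℝ)⁻¹ * ∑ i, a1 i)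
    (habar0 : abar0 = (M : ℝ)⁻¹ * ∑ i, a0 i)
    (hτbar : τbar = (M : ℝ)⁻¹ * ∑ i, (a1 i - a0 i))
    (hS1 : S1sq = ((M : ℝ) - 1)⁻¹ * ∑ i, (a1 i - abar1) ^ 2)
    (hS0 : S0sq = ((M : ℝ) - 1)⁻¹ * ∑ i, (a0 i - abar0) ^ 2)
    (hSt : Stausq = ((M : ℝ) - 1)⁻¹ * ∑ i, ((a1 i - a0 i) - τbar) ^ 2) :
    E (fun S => (τhat S - E τhat) ^ 2)
      = S1sq / m + S0sq / ((M : ℝ) - m) - Stausq / M := by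
  -- basic nonvanishing facts
  have hMR : (M : ℝ) ≠ 0 := by positivity
  have hmR : (m : ℝ) ≠ 0 := by positivity
  have hMmR : (M : ℝ) - m ≠ 0 := by
    have : (m : ℝ) < M := by exact_mod_cast hM
    linarith
  have hM1R : (M : ℝ) - 1 ≠ 0 := by
    have : (1 : ℝ) < M := by exact_mod_cast hM2.trans_lt' one_lt_two
    linarith
  -- cardinality of the sample space
  set P := Finset.powersetCard m (Finset.univ : Finset (Fin M)) with hP
  have hcard : P.card = M.choose m := by
    rw [hP, Finset.card_powersetCard, card_univ, Fintype.card_fin]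
  have hnpos : 0 < M.choose m := Nat.choose_pos hM.le
  have hnR : (M.choose m : ℝ) ≠ 0 := by positivity
  set n : ℝ := (M.choose m : ℝ) with hn
  set c1 : ℝ := ((M-1).choose (m-1) : ℝ) with hc1
  set γ : ℝ := (((if 2 ≤ m then (M-2).choose (m-2) else 0 : ℕ)) : ℝ) with hγ
  -- choose identities
  have hid1 : (M : ℝ) * c1 = n * m := by
    have h := Nat.add_one_mul_choose_eq (M-1) (m-1)
    have e1 : M - 1 + 1 = M := by omega
    have e2 : m - 1 + 1 = m := by omega
    simp only [Nat.succ_eq_add_one, e1, e2] at h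
    rw [hc1, hn]
    exact_mod_cast h
  have hid2 : ((M : ℝ) - 1) * γ = c1 * ((m : ℝ) - 1) := by
    have h : (M-1) * (if 2 ≤ m then (M-2).choose (m-2) else 0) = ((M-1).choose (m-1)) * (m-1) := by
      split_ifs with h2
      · have := Nat.add_one_mul_choose_eq (M-2) (m-2)
        have e1 : M - 2 + 1 = M - 1 := by omega
        have e2 : m - 2 + 1 = m - 1 := by omega
        simp only [Nat.succ_eq_add_one, e1, e2] at this
        exact this
      · have : m - 1 = 0 := by omega
        simp [this]
    have h' : (((M-1) : ℕ) : ℝ) * γ = c1 * (((m-1) : ℕ) : ℝ) := by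
      rw [hγ, hc1]; exact_mod_cast h
    rwa [Nat.cast_sub (show 1 ≤ M by omega), Nat.cast_sub (show 1 ≤ m by omega),
      Nat.cast_one] at h'
  have hc1v : c1 = n * m / M := by rw [eq_div_iff hMR, ← hid1]; ring
  have hγv : γ = n * m * ((m : ℝ) - 1) / ((M : ℝ) * ((M : ℝ) - 1)) := by
    field_simp
    calc γ * (M:ℝ) * ((M:ℝ)-1) = (M:ℝ) * (((M:ℝ)-1) * γ) := by ring
      _ = (M:ℝ) * (c1 * ((m:ℝ)-1)) := by rw [hid2]
      _ = ((M:ℝ) * c1) * ((m:ℝ)-1) := by ring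
      _ = n * (m:ℝ) * ((m:ℝ)-1) := by rw [hid1]
  -- rewrite τhat
  set w : Fin M → ℝ := fun i => (m : ℝ)⁻¹ * a1 i + ((M : ℝ) - m)⁻¹ * a0 i with hw
  set K : ℝ := ((M : ℝ) - m)⁻¹ * ∑ i, a0 i with hK
  have hτ' : ∀ S : Finset (Fin M), τhat S = (∑ i ∈ S, w i) - K := by
    intro S
    have hcompl : ∑ i ∈ Sᶜ, a0 i = (∑ i, a0 i) - ∑ i ∈ S, a0 i := by
      rw [← Finset.sum_add_sum_compl S a0]; ring
    rw [hτhat S, hcompl, hw, hK]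
    rw [Finset.sum_add_distrib, ← Finset.mul_sum, ← Finset.mul_sum]
    ring
  set W : ℝ := ∑ i, w i with hW
  set Q : ℝ := ∑ i, (w i)^2 with hQ
  set R : ℝ := ∑ i, ∑ j ∈ Finset.univ.erase i, w i * w j with hR
  have hRv : R = W^2 - Q := by
    have h : ∀ i : Fin M, ∑ j ∈ Finset.univ.erase i, w i * w j = w i * W - (w i)^2 := by
      intro i
      rw [Finset.sum_erase_eq_sub (mem_univ i), ← Finset.mul_sum, ← hW, sq]
    rw [hR, Finset.sum_congr rfl fun i _ => h i, Finset.sum_sub_distrib, ← Finset.sum_mul,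
      ← hW, ← hQ, sq]
  -- E of τhat
  have hsum1 : ∑ S ∈ P, ∑ i ∈ S, w i = c1 * W := first_moment M m hm hM.le w
  have hEτ : E τhat = n⁻¹ * c1 * W - K := by
    rw [hE τhat, hcard, ← hn, Finset.sum_congr rfl fun S _ => hτ' S, Finset.sum_sub_distrib,
      hsum1, Finset.sum_const, hcard, nsmul_eq_mul, ← hn]
    field_simp
  set μ : ℝ := n⁻¹ * c1 * W with hμ
  -- the variance
  have hvar : E (fun S => (τhat S - E τhat) ^ 2)
      = n⁻¹ * (c1 * Q + γ * R - 2 * μ * (c1 * W) + n * μ^2) := by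
    rw [hE, hcard, ← hn]
    congr 1
    have hdev : ∀ S : Finset (Fin M), (τhat S - E τhat)^2
        = (∑ i ∈ S, w i)^2 - 2 * μ * (∑ i ∈ S, w i) + μ^2 := by
      intro S
      rw [hτ' S, hEτ]
      ring
    rw [Finset.sum_congr rfl fun S _ => hdev S, Finset.sum_add_distrib, Finset.sum_sub_distrib,
      second_moment M m hm hM.le w, ← hc1, ← hγ, ← hQ, ← hR]
    have e1 : ∑ x ∈ P, 2 * μ * (∑ i ∈ x, w i) = 2 * μ * (c1 * W) := by
      rw [← Finset.mul_sum, hsum1]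
    have e2 : ∑ _x ∈ P, μ ^ 2 = n * μ ^ 2 := by
      rw [Finset.sum_const, hcard, nsmul_eq_mul, ← hn]
    rw [e1, e2]
  rw [hvar, hRv, hμ]
  -- expand sums into atoms
  set T1 : ℝ := ∑ i, a1 i with hT1
  set T0 : ℝ := ∑ i, a0 i with hT0
  set P1 : ℝ := ∑ i, (a1 i)^2 with hP1
  set P0 : ℝ := ∑ i, (a0 i)^2 with hP0
  set P10 : ℝ := ∑ i, a1 i * a0 i with hP10
  have hWv : W = (m : ℝ)⁻¹ * T1 + ((M : ℝ) - m)⁻¹ * T0 := by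
    rw [hW, hw, Finset.sum_add_distrib, ← Finset.mul_sum, ← Finset.mul_sum]
  have hQv : Q = (m : ℝ)⁻¹^2 * P1 + ((M : ℝ) - m)⁻¹^2 * P0
      + 2 * (m : ℝ)⁻¹ * ((M : ℝ) - m)⁻¹ * P10 := by
    have h : ∀ i : Fin M, (w i)^2 = (m : ℝ)⁻¹^2 * (a1 i)^2 + ((M : ℝ) - m)⁻¹^2 * (a0 i)^2
        + 2 * (m : ℝ)⁻¹ * ((M : ℝ) - m)⁻¹ * (a1 i * a0 i) := by
      intro i; rw [hw]; ring
    rw [hQ, Finset.sum_congr rfl fun i _ => h i, Finset.sum_add_distrib, Finset.sum_add_distrib,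
      ← Finset.mul_sum, ← Finset.mul_sum, ← Finset.mul_sum]
  have hcardM : ((Finset.univ : Finset (Fin M)).card : ℝ) = M := by
    rw [card_univ, Fintype.card_fin]
  have hS1v : ∑ i, (a1 i - abar1)^2 = P1 - 2 * abar1 * T1 + M * abar1^2 := by
    have h : ∀ i : Fin M, (a1 i - abar1)^2 = (a1 i)^2 - 2 * abar1 * a1 i + abar1^2 := by
      intro i; ring
    rw [Finset.sum_congr rfl fun i _ => h i, Finset.sum_add_distrib, Finset.sum_sub_distrib,
      ← Finset.mul_sum, Finset.sum_const, nsmul_eq_mul, hcardM]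
  have hS0v : ∑ i, (a0 i - abar0)^2 = P0 - 2 * abar0 * T0 + M * abar0^2 := by
    have h : ∀ i : Fin M, (a0 i - abar0)^2 = (a0 i)^2 - 2 * abar0 * a0 i + abar0^2 := by
      intro i; ring
    rw [Finset.sum_congr rfl fun i _ => h i, Finset.sum_add_distrib, Finset.sum_sub_distrib,
      ← Finset.mul_sum, Finset.sum_const, nsmul_eq_mul, hcardM]
  have hStv : ∑ i, ((a1 i - a0 i) - τbar)^2
      = P1 + P0 - 2 * P10 - 2 * τbar * T1 + 2 * τbar * T0 + M * τbar^2 := by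
    have h : ∀ i : Fin M, ((a1 i - a0 i) - τbar)^2
        = ((a1 i)^2 + (a0 i)^2 + τbar^2) - (2 * (a1 i * a0 i) + 2 * τbar * a1 i)
          + 2 * τbar * a0 i := by
      intro i; ring
    rw [Finset.sum_congr rfl fun i _ => h i, Finset.sum_add_distrib, Finset.sum_sub_distrib,
      Finset.sum_add_distrib, Finset.sum_add_distrib, Finset.sum_add_distrib,
      ← Finset.mul_sum, ← Finset.mul_sum, ← Finset.mul_sum, Finset.sum_const, nsmul_eq_mul,
      hcardM]
    ring
  have hτbarv : τbar = (M : ℝ)⁻¹ * (T1 - T0) := by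
    rw [hτbar, Finset.sum_sub_distrib, ← hT1, ← hT0]
  rw [hS1, hS0, hSt, hS1v, hS0v, hStv, hWv, hQv, hc1v, hγv, habar1, habar0, hτbarv]
  exact key_alg (M:ℝ) (m:ℝ) n T1 T0 P1 P0 P10 hMR hmR hMmR hM1R hnR
end

section
/- (Horvitz–Thompson dominates Hájek in an extreme case.) Consider a cluster-randomized experiment with M clusters (M even), treated fraction e = 1/2 (a uniformly random subset of M/2 clusters is treated), cluster sizes n_i, N = Σ n_i, and fixed potential outcomes Y_{ij}(z) with both population means zero: N^{-1} Σ_{ij} Y_{ij}(1) = N^{-1} Σ_{ij} Y_{ij}(0) = 0 (so τ = 0). Let τ̂_T = (eN)^{-1} Σ_{ij∈T} Y_{ij} − ((1−e)N)^{-1} Σ_{ij∈C} Y_{ij} (Horvitz–Thompson) and τ̂_I = n_T^{-1} Σ_{ij∈T} Y_{ij} − n_C^{-1} Σ_{ij∈C} Y_{ij} (Hájek), where T and C are the treated and control units and n_T, n_C their cardinalities. Then E[(τ̂_T − τ)²] ≤ E[(τ̂_I − τ)²]. -/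
open Finset

private lemma key_ineq (a b p q : ℝ) (hp : 0 < p) (hq : 0 < q) :
    2 * (2 * (a + b) / (p + q)) ^ 2 ≤ (a / p + b / q) ^ 2 + (a / q + b / p) ^ 2 := by
  have hpq : (0:ℝ) < p + q := by linarith
  have e1 : a / p + b / q = (a * q + b * p) / (p * q) := by
    field_simp
  have e2 : a / q + b / p = (a * p + b * q) / (p * q) := by
    rw [div_add_div _ _ hq.ne' hp.ne']; ring_nf
  rw [e1, e2]
  simp only [div_pow]
  rw [← add_div, ← mul_div_assoc, div_le_div_iff₀ (by positivity) (by positivity)]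
  nlinarith [sq_nonneg ((a + b) * (p - q) * (p + q)),
    mul_nonneg (mul_pos hp hq).le (sq_nonneg ((a + b) * (p - q))),
    sq_nonneg ((a - b) * (p - q) * (p + q))]

/-- With `e = 1/2` and both potential-outcome population means equal to zero,
the Horvitz–Thompson estimator has no larger mean squared error than the
Hájek (difference-in-means) estimator. -/
theorem stmt_15 (M m : ℕ) (hM : M = 2 * m) (hm : 0 < m)
    (n : Fin M → ℕ) (hn : ∀ i, 1 ≤ n i)
    (N : ℕ) (hN : N = ∑ i, n i)
    (Y1 Y0 : (i : Fin M) → Fin (n i) → ℝ)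
    (hmean1 : (N : ℝ)⁻¹ * ∑ i, ∑ j, Y1 i j = 0)
    (hmean0 : (N : ℝ)⁻¹ * ∑ i, ∑ j, Y0 i j = 0)
    (τ : ℝ) (hτ : τ = (N : ℝ)⁻¹ * ∑ i, ∑ j, (Y1 i j - Y0 i j))
    (τT τI : Finset (Fin M) → ℝ)
    (hτT : ∀ S, τT S =
      ((1 / 2 : ℝ) * N)⁻¹ * ∑ i ∈ S, ∑ j, Y1 i j
        - ((1 - 1 / 2 : ℝ) * N)⁻¹ * ∑ i ∈ Sᶜ, ∑ j, Y0 i j)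
    (hτI : ∀ S, τI S =
      ((∑ i ∈ S, n i : ℕ) : ℝ)⁻¹ * ∑ i ∈ S, ∑ j, Y1 i j
        - ((∑ i ∈ Sᶜ, n i : ℕ) : ℝ)⁻¹ * ∑ i ∈ Sᶜ, ∑ j, Y0 i j) :
    ((Finset.powersetCard m (Finset.univ : Finset (Fin M))).card : ℝ)⁻¹ *
      ∑ S ∈ Finset.powersetCard m (Finset.univ : Finset (Fin M)), (τT S - τ) ^ 2
    ≤ ((Finset.powersetCard m (Finset.univ : Finset (Fin M))).card : ℝ)⁻¹ *
      ∑ S ∈ Finset.powersetCard m (Finset.univ : Finset (Fin M)), (τI S - τ) ^ 2 := by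
  -- N is positive
  have hNposN : 0 < N := by
    rw [hN]
    refine Finset.sum_pos (fun i _ => hn i) ⟨⟨0, by omega⟩, mem_univ _⟩
  have hNR : (0:ℝ) < (N : ℝ) := by exact_mod_cast hNposN
  -- population sums vanish
  have hsum1 : ∑ i, ∑ j, Y1 i j = 0 := by
    rcases mul_eq_zero.mp hmean1 with h | h
    · exact absurd h (inv_ne_zero hNR.ne')
    · exact h
  have hsum0 : ∑ i, ∑ j, Y0 i j = 0 := by
    rcases mul_eq_zero.mp hmean0 with h | h
    · exact absurd h (inv_ne_zero hNR.ne')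
    · exact h
  have hτ0 : τ = 0 := by
    rw [hτ]
    have : ∑ i, ∑ j, (Y1 i j - Y0 i j) = (∑ i, ∑ j, Y1 i j) - ∑ i, ∑ j, Y0 i j := by
      rw [← Finset.sum_sub_distrib]
      exact Finset.sum_congr rfl fun i _ => Finset.sum_sub_distrib _ _
    rw [this, hsum1, hsum0]
    ring
  simp only [hτ0, sub_zero]
  set P := Finset.powersetCard m (Finset.univ : Finset (Fin M)) with hPdef
  refine mul_le_mul_of_nonneg_left ?_ (by positivity)
  -- complement maps P to P
  have hcompl : ∀ S ∈ P, Sᶜ ∈ P := by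
    intro S hS
    rw [hPdef, Finset.mem_powersetCard_univ] at *
    rw [Finset.card_compl, hS, Fintype.card_fin]
    omega
  -- pairwise inequality
  have hpair : ∀ S ∈ P, 0 ≤ ((τI S) ^ 2 - (τT S) ^ 2) + ((τI Sᶜ) ^ 2 - (τT Sᶜ) ^ 2) := by
    intro S hS
    have hScard : S.card = m := Finset.mem_powersetCard_univ.mp hS
    have hSccard : Sᶜ.card = m := Finset.mem_powersetCard_univ.mp (hcompl S hS)
    set a := ∑ i ∈ S, ∑ j, Y1 i j with ha
    set b := ∑ i ∈ S, ∑ j, Y0 i j with hb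
    have ha' : ∑ i ∈ Sᶜ, ∑ j, Y1 i j = -a := by
      have h := Finset.sum_add_sum_compl S (fun i => ∑ j, Y1 i j)
      rw [hsum1] at h; linarith
    have hb' : ∑ i ∈ Sᶜ, ∑ j, Y0 i j = -b := by
      have h := Finset.sum_add_sum_compl S (fun i => ∑ j, Y0 i j)
      rw [hsum0] at h; linarith
    set p := ((∑ i ∈ S, n i : ℕ) : ℝ) with hp'
    set q := ((∑ i ∈ Sᶜ, n i : ℕ) : ℝ) with hq'
    have hpnat : 0 < ∑ i ∈ S, n i := by
      refine Finset.sum_pos (fun i _ => hn i) ?_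
      rw [← Finset.card_pos, hScard]; exact hm
    have hqnat : 0 < ∑ i ∈ Sᶜ, n i := by
      refine Finset.sum_pos (fun i _ => hn i) ?_
      rw [← Finset.card_pos, hSccard]; exact hm
    have hp : (0:ℝ) < p := by rw [hp']; exact_mod_cast hpnat
    have hq : (0:ℝ) < q := by rw [hq']; exact_mod_cast hqnat
    have hpqN : p + q = (N : ℝ) := by
      rw [hp', hq', hN]
      push_cast [← Finset.sum_add_sum_compl S n]
      ring
    have eT : τT S = 2 * (a + b) / (p + q) := by
      rw [hτT S, hb', ← ha, hpqN]
      field_simp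
      ring
    have eT' : τT Sᶜ = -(2 * (a + b) / (p + q)) := by
      rw [hτT Sᶜ, compl_compl, ha', ← hb, hpqN]
      field_simp
      ring
    have eI : τI S = a / p + b / q := by
      rw [hτI S, hb', ← ha, ← hp', ← hq']
      ring
    have eI' : τI Sᶜ = -(a / q + b / p) := by
      rw [hτI Sᶜ, compl_compl, ha', ← hb, ← hp', ← hq']
      ring
    rw [eT, eT', eI, eI']
    have h := key_ineq a b p q hp hq
    nlinarith [h]
  -- reindex sum by complement
  have hswap : ∑ S ∈ P, ((τI Sᶜ) ^ 2 - (τT Sᶜ) ^ 2) = ∑ S ∈ P, ((τI S) ^ 2 - (τT S) ^ 2) := by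
    refine Finset.sum_nbij' (fun S => Sᶜ) (fun S => Sᶜ) hcompl hcompl
      (fun S _ => compl_compl S) (fun S _ => compl_compl S) (fun S _ => rfl)
  have hnn : 0 ≤ ∑ S ∈ P, (((τI S) ^ 2 - (τT S) ^ 2) + ((τI Sᶜ) ^ 2 - (τT Sᶜ) ^ 2)) :=
    Finset.sum_nonneg hpair
  rw [Finset.sum_add_distrib, hswap] at hnn
  have : 0 ≤ ∑ S ∈ P, ((τI S) ^ 2 - (τT S) ^ 2) := by linarith
  rw [Finset.sum_sub_distrib] at this
  linarith
end
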